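/- Existence of fitting-sequence totals: if L is an r×s ρ-latin rectangle that extends to an n×n ρ-latin square, then with P_t := {ℓ ∈ [k] : ρ_ℓ − e_ℓ > n − t} for t ∈ {r, s}, one has Σ_{ℓ∈P_r}(ρ_ℓ − e_ℓ) ≤ r(n−s) + |P_r|(n−r) and Σ_{ℓ∈P_s}(ρ_ℓ − e_ℓ) ≤ s(n−r) + |P_s|(n−s). -/

import Mathlib

open Finset

/-- `L` is a (partial) latin array: each symbol occurs at most once in each
row and at most once in each column. -/
def latinArr {r s k : ℕ} (L : Fin r → Fin s → Fin k) : Prop :=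
  (∀ i, Function.Injective (L i)) ∧ (∀ j, Function.Injective (fun i => L i j))

/-- Number of occurrences of symbol `ℓ` in `L`. -/
def symCount {r s k : ℕ} (L : Fin r → Fin s → Fin k) (ℓ : Fin k) : ℕ :=
  ((univ : Finset (Fin r × Fin s)).filter (fun p => L p.1 p.2 = ℓ)).card

/-- `μ_I(ℓ)`: number of rows in `I` in which symbol `ℓ` is missing. -/
def muRows {r s k : ℕ} (L : Fin r → Fin s → Fin k) (I : Finset (Fin r)) (ℓ : Fin k) : ℕ :=
  (I.filter (fun i => ∀ j, L i j ≠ ℓ)).card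

/-- `μ_J(ℓ)`: number of columns in `J` in which symbol `ℓ` is missing. -/
def muCols {r s k : ℕ} (L : Fin r → Fin s → Fin k) (J : Finset (Fin s)) (ℓ : Fin k) : ℕ :=
  (J.filter (fun j => ∀ i, L i j ≠ ℓ)).card

/-- `μ_K(i)` for a row `i`: number of symbols of `K` missing in row `i`. -/
def muSymRow {r s k : ℕ} (L : Fin r → Fin s → Fin k) (K : Finset (Fin k)) (i : Fin r) : ℕ :=
  (K.filter (fun ℓ => ∀ j, L i j ≠ ℓ)).card

/-- `μ_K(j)` for a column `j`: number of symbols of `K` missing in column `j`. -/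
def muSymCol {r s k : ℕ} (L : Fin r → Fin s → Fin k) (K : Finset (Fin k)) (j : Fin s) : ℕ :=
  (K.filter (fun ℓ => ∀ i, L i j ≠ ℓ)).card

/-- `S` is an `n × n` `ρ`-latin square. -/
def rhoLatinSquare {n k : ℕ} (ρ : Fin k → ℕ) (S : Fin n → Fin n → Fin k) : Prop :=
  latinArr S ∧ ∀ ℓ, symCount S ℓ = ρ ℓ

/-- `S` extends `L` on the top-left `r × s` corner. -/
def extends' {r s n k : ℕ} (hr : r ≤ n) (hs : s ≤ n)
    (L : Fin r → Fin s → Fin k) (S : Fin n → Fin n → Fin k) : Prop :=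
  ∀ i j, S (Fin.castLE hr i) (Fin.castLE hs j) = L i j

lemma card_filter_fin_lt {n r : ℕ} (h : r ≤ n) :
    ((univ : Finset (Fin n)).filter (fun i => i.val < r)).card = r := by
  have : (univ : Finset (Fin n)).filter (fun i => i.val < r)
      = (univ : Finset (Fin r)).map (Fin.castLEEmb h) := by
    ext i
    simp only [mem_filter, mem_univ, true_and, mem_map, Fin.castLEEmb_apply]
    constructor
    · intro h1; exact ⟨⟨i, h1⟩, Fin.ext rfl⟩
    · rintro ⟨j, rfl⟩; exact j.2
  rw [this, card_map, card_univ, Fintype.card_fin]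

lemma card_filter_swap {α β : Type*} [Fintype α] [Fintype β]
    (Q : α → β → Prop) [∀ a b, Decidable (Q a b)] :
    ((univ : Finset (α × β)).filter (fun p => Q p.1 p.2)).card
      = ((univ : Finset (β × α)).filter (fun p => Q p.2 p.1)).card := by
  apply Finset.card_bij (fun p _ => p.swap)
  · intro p hp; simpa using (mem_filter.mp hp).2
  · intro p _ q _ h; exact Prod.swap_injective h
  · intro q hq
    exact ⟨q.swap, by simpa using (mem_filter.mp hq).2, by simp⟩

/-- Main counting lemma, stated for rows. -/
lemma key {n k : ℕ} (r s : ℕ) (hr : r ≤ n) (hs : s ≤ n)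
    (ρ e : Fin k → ℕ)
    (S : Fin n → Fin n → Fin k)
    (hrow : ∀ i, Function.Injective (S i))
    (hρ : ∀ ℓ, symCount S ℓ = ρ ℓ)
    (he : ∀ ℓ, e ℓ = ((univ : Finset (Fin n × Fin n)).filter
        (fun p => S p.1 p.2 = ℓ ∧ p.1.val < r ∧ p.2.val < s)).card)
    (P : Finset (Fin k)) :
    ∑ ℓ ∈ P, (ρ ℓ - e ℓ) ≤ r * (n - s) + P.card * (n - r) := by
  classical
  set T : Fin k → ℕ := fun ℓ => ((univ : Finset (Fin n × Fin n)).filter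
      (fun p => S p.1 p.2 = ℓ ∧ p.1.val < r ∧ ¬ p.2.val < s)).card with hT
  set B : Fin k → ℕ := fun ℓ => ((univ : Finset (Fin n × Fin n)).filter
      (fun p => S p.1 p.2 = ℓ ∧ ¬ p.1.val < r)).card with hB
  -- ρ ℓ = e ℓ + T ℓ + B ℓ
  have hsplit : ∀ ℓ, ρ ℓ = e ℓ + T ℓ + B ℓ := by
    intro ℓ
    rw [← hρ, he, symCount]
    have h1 := Finset.card_filter_add_card_filter_not
      (s := (univ : Finset (Fin n × Fin n)).filter (fun p => S p.1 p.2 = ℓ))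
      (p := fun p => p.1.val < r)
    have h2 := Finset.card_filter_add_card_filter_not
      (s := ((univ : Finset (Fin n × Fin n)).filter (fun p => S p.1 p.2 = ℓ)).filter
        (fun p => p.1.val < r))
      (p := fun p => p.2.val < s)
    simp only [Finset.filter_filter] at h1 h2
    have e1 : ((univ : Finset (Fin n × Fin n)).filter
        (fun p => S p.1 p.2 = ℓ ∧ p.1.val < r ∧ p.2.val < s)).card
        = ((univ : Finset (Fin n × Fin n)).filter
        (fun p => (S p.1 p.2 = ℓ ∧ p.1.val < r) ∧ p.2.val < s)).card := by
      congr 1; apply filter_congr; intro p _; simp [and_assoc]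
    have e2 : T ℓ = ((univ : Finset (Fin n × Fin n)).filter
        (fun p => (S p.1 p.2 = ℓ ∧ p.1.val < r) ∧ ¬ p.2.val < s)).card := by
      show ((univ : Finset (Fin n × Fin n)).filter
        (fun p => S p.1 p.2 = ℓ ∧ p.1.val < r ∧ ¬ p.2.val < s)).card = _
      congr 1; apply filter_congr; intro p _; simp [and_assoc]
    have hBdef : B ℓ = ((univ : Finset (Fin n × Fin n)).filter
        (fun p => S p.1 p.2 = ℓ ∧ ¬ p.1.val < r)).card := rfl
    rw [e1, e2, hBdef]
    omega
  have hrhosub : ∀ ℓ, ρ ℓ - e ℓ = T ℓ + B ℓ := fun ℓ => by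
    have := hsplit ℓ; omega
  -- B ℓ ≤ n - r
  have hBle : ∀ ℓ, B ℓ ≤ n - r := by
    intro ℓ
    have : B ℓ ≤ ((univ : Finset (Fin n)).filter (fun i => ¬ i.val < r)).card := by
      apply Finset.card_le_card_of_injOn (fun p => p.1)
      · intro p hp
        simp only [mem_filter, mem_univ, true_and] at hp ⊢
        simpa using (Finset.mem_filter.mp hp).2.2
      · intro p hp q hq hpq
        simp only [coe_filter, Set.mem_setOf_eq] at hp hq
        have hfst : p.1 = q.1 := hpq
        have h2 : p.2 = q.2 := by
          apply hrow p.1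
          rw [hp.2.1, hfst]
          exact hq.2.1.symm
        exact Prod.ext hfst h2
    rwa [Finset.filter_not, Finset.card_sdiff_of_subset (filter_subset _ _), card_univ,
      Fintype.card_fin, card_filter_fin_lt hr] at this
  -- ∑ over all ℓ of T ℓ = r * (n - s)
  have hTsum : ∑ ℓ ∈ (univ : Finset (Fin k)), T ℓ = r * (n - s) := by
    have hfib := Finset.card_eq_sum_card_fiberwise
      (s := (univ : Finset (Fin n × Fin n)).filter (fun p => p.1.val < r ∧ ¬ p.2.val < s))
      (t := (univ : Finset (Fin k))) (f := fun p => S p.1 p.2)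
      (fun p _ => mem_univ _)
    have hreg : ((univ : Finset (Fin n × Fin n)).filter
        (fun p => p.1.val < r ∧ ¬ p.2.val < s)).card = r * (n - s) := by
      have : (univ : Finset (Fin n × Fin n)).filter (fun p => p.1.val < r ∧ ¬ p.2.val < s)
          = ((univ : Finset (Fin n)).filter (fun i => i.val < r)) ×ˢ
            ((univ : Finset (Fin n)).filter (fun j => ¬ j.val < s)) := by
        ext p; simp [Finset.mem_product, and_assoc]
      rw [this, Finset.card_product, card_filter_fin_lt hr, Finset.filter_not,
        Finset.card_sdiff_of_subset (filter_subset _ _), card_univ, Fintype.card_fin,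
        card_filter_fin_lt hs]
    rw [← hreg, hfib]
    apply Finset.sum_congr rfl
    intro ℓ _
    rw [Finset.filter_filter]
    show ((univ : Finset (Fin n × Fin n)).filter
        (fun p => S p.1 p.2 = ℓ ∧ p.1.val < r ∧ ¬ p.2.val < s)).card = _
    congr 1
    apply filter_congr; intro p _; simp; tauto
  calc ∑ ℓ ∈ P, (ρ ℓ - e ℓ) = ∑ ℓ ∈ P, (T ℓ + B ℓ) := by
        exact Finset.sum_congr rfl (fun ℓ _ => hrhosub ℓ)
    _ = ∑ ℓ ∈ P, T ℓ + ∑ ℓ ∈ P, B ℓ := Finset.sum_add_distrib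
    _ ≤ r * (n - s) + P.card * (n - r) := by
        apply Nat.add_le_add
        · rw [← hTsum]
          exact Finset.sum_le_sum_of_subset (subset_univ P)
        · calc ∑ ℓ ∈ P, B ℓ ≤ ∑ _ℓ ∈ P, (n - r) :=
                Finset.sum_le_sum (fun ℓ _ => hBle ℓ)
            _ = P.card * (n - r) := by rw [Finset.sum_const, smul_eq_mul]

theorem stmt19' (n k r s : ℕ) (hr : r < n) (hs : s < n) (hnk : n ≤ k)
    (ρ : Fin k → ℕ) (hρ1 : ∀ ℓ, 1 ≤ ρ ℓ) (hρn : ∀ ℓ, ρ ℓ ≤ n)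
    (hsum : ∑ ℓ, ρ ℓ = n ^ 2)
    (L : Fin r → Fin s → Fin k) (hL : latinArr L)
    (he : ∀ ℓ, symCount L ℓ ≤ ρ ℓ)
    (S : Fin n → Fin n → Fin k) (hS : rhoLatinSquare ρ S)
    (hext : extends' hr.le hs.le L S) :
    (∑ ℓ ∈ (univ : Finset (Fin k)).filter
        (fun ℓ => n - r < ρ ℓ - symCount L ℓ), (ρ ℓ - symCount L ℓ) ≤
      r * (n - s) + ((univ : Finset (Fin k)).filter
        (fun ℓ => n - r < ρ ℓ - symCount L ℓ)).card * (n - r)) ∧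
    (∑ ℓ ∈ (univ : Finset (Fin k)).filter
        (fun ℓ => n - s < ρ ℓ - symCount L ℓ), (ρ ℓ - symCount L ℓ) ≤
      s * (n - r) + ((univ : Finset (Fin k)).filter
        (fun ℓ => n - s < ρ ℓ - symCount L ℓ)).card * (n - s)) := by
  classical
  obtain ⟨⟨hSrow, hScol⟩, hScount⟩ := hS
  -- corner count equals symCount L
  have hcorner : ∀ ℓ, symCount L ℓ = ((univ : Finset (Fin n × Fin n)).filter
      (fun p => S p.1 p.2 = ℓ ∧ p.1.val < r ∧ p.2.val < s)).card := by
    intro ℓ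
    rw [symCount]
    apply Finset.card_bij (fun p _ => (Fin.castLE hr.le p.1, Fin.castLE hs.le p.2))
    · intro p hp
      simp only [mem_filter, mem_univ, true_and] at hp ⊢
      exact ⟨by rw [hext]; exact hp, p.1.2, p.2.2⟩
    · intro p _ q _ h
      have h1 : (p.1 : ℕ) = q.1 := congrArg (fun x => (x.1 : ℕ)) h
      have h2 : (p.2 : ℕ) = q.2 := congrArg (fun x => (x.2 : ℕ)) h
      exact Prod.ext (Fin.ext h1) (Fin.ext h2)
    · intro q hq
      simp only [mem_filter, mem_univ, true_and] at hq
      refine ⟨(⟨q.1, hq.2.1⟩, ⟨q.2, hq.2.2⟩), ?_, ?_⟩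
      · simp only [mem_filter, mem_univ, true_and]
        rw [← hext]
        convert hq.1 using 2 <;> exact Fin.ext rfl
      · exact Prod.ext (Fin.ext rfl) (Fin.ext rfl)
  constructor
  · exact key r s hr.le hs.le ρ (fun ℓ => symCount L ℓ) S hSrow hScount hcorner _
  · -- transpose
    set S' : Fin n → Fin n → Fin k := fun i j => S j i with hS'
    have hrow' : ∀ i, Function.Injective (S' i) := fun i => hScol i
    have hρ' : ∀ ℓ, symCount S' ℓ = ρ ℓ := by
      intro ℓ
      rw [← hScount ℓ, symCount, symCount]
      exact card_filter_swap (fun a b => S b a = ℓ)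
    have hcorner' : ∀ ℓ, symCount L ℓ = ((univ : Finset (Fin n × Fin n)).filter
        (fun p => S' p.1 p.2 = ℓ ∧ p.1.val < s ∧ p.2.val < r)).card := by
      intro ℓ
      rw [hcorner ℓ]
      have := card_filter_swap (fun (a b : Fin n) => S a b = ℓ ∧ a.val < r ∧ b.val < s)
      rw [this]
      congr 1
      apply filter_congr; intro p _; simp [hS']; tauto
    exact key s r hs.le hr.le ρ (fun ℓ => symCount L ℓ) S' hrow' hρ' hcorner' _

/-- If an `r × s` `ρ`-latin rectangle extends to an `n × n` `ρ`-latin square,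
then with `P_t = {ℓ : ρ_ℓ - e_ℓ > n - t}`,
`∑_{ℓ∈P_r}(ρ_ℓ - e_ℓ) ≤ r(n-s) + |P_r|(n-r)` and
`∑_{ℓ∈P_s}(ρ_ℓ - e_ℓ) ≤ s(n-r) + |P_s|(n-s)`. -/
theorem stmt19 (n k r s : ℕ) (hr : r < n) (hs : s < n) (hnk : n ≤ k)
    (ρ : Fin k → ℕ) (hρ1 : ∀ ℓ, 1 ≤ ρ ℓ) (hρn : ∀ ℓ, ρ ℓ ≤ n)
    (hsum : ∑ ℓ, ρ ℓ = n ^ 2)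
    (L : Fin r → Fin s → Fin k) (hL : latinArr L)
    (he : ∀ ℓ, symCount L ℓ ≤ ρ ℓ)
    (S : Fin n → Fin n → Fin k) (hS : rhoLatinSquare ρ S)
    (hext : extends' hr.le hs.le L S) :
    (∑ ℓ ∈ (univ : Finset (Fin k)).filter
        (fun ℓ => n - r < ρ ℓ - symCount L ℓ), (ρ ℓ - symCount L ℓ) ≤
      r * (n - s) + ((univ : Finset (Fin k)).filter
        (fun ℓ => n - r < ρ ℓ - symCount L ℓ)).card * (n - r)) ∧
    (∑ ℓ ∈ (univ : Finset (Fin k)).filter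
        (fun ℓ => n - s < ρ ℓ - symCount L ℓ), (ρ ℓ - symCount L ℓ) ≤
      s * (n - r) + ((univ : Finset (Fin k)).filter
        (fun ℓ => n - s < ρ ℓ - symCount L ℓ)).card * (n - s)) :=
  stmt19' n k r s hr hs hnk ρ hρ1 hρn hsum L hL he S hS hext
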